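/- (Overshoot-aware multiplicative drift, upper bound.) Let D ⊆ {0} ∪ (0, ∞) and let (X_t)_{t∈ℕ} be integrable random variables adapted to a filtration (F_t), taking values in D. Let k ∈ D be the target, let T = inf{t : X_t ≤ k}, and let k' = inf{x ∈ D : x > k}; assume k' > 0, that X_0 = x_0 ≥ k' is deterministic, that T is almost surely finite, and that X_T is integrable, where X_T denotes the value of the process at time T. Suppose there is δ > 0 such that for all t, on the event {t < T}, X_t − E[X_{t+1} | F_t] ≥ δ·X_t almost surely. Then E[T] ≤ (1/δ) · ( 1 − E[X_T]/k' + ln(x_0 / k') ). -/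

import Mathlib

open MeasureTheory Filter

/-- First time at which the process `X` takes a value `≤ k` (`⊤` if this never happens). -/
noncomputable def hitTimeLE {Ω : Type*} (X : ℕ → Ω → ℝ) (k : ℝ) (ω : Ω) : ℕ∞ :=
  sInf {r : ℕ∞ | ∃ t : ℕ, r = (t : ℕ∞) ∧ X t ω ≤ k}

/-- The value `X_T` of the process at the (a.s. finite) stopping time `T`. -/
noncomputable def stoppedVal {Ω : Type*} (X : ℕ → Ω → ℝ) (T : Ω → ℕ∞) (ω : Ω) : ℝ :=
  X (T ω).toNat ω

lemma hitTimeLE_eq_find {Ω : Type*} {X : ℕ → Ω → ℝ} {k : ℝ} {ω : Ω}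
    (h : ∃ t, X t ω ≤ k) : hitTimeLE X k ω = ((Nat.find h : ℕ) : ℕ∞) := by
  unfold hitTimeLE
  refine le_antisymm (sInf_le ⟨Nat.find h, rfl, Nat.find_spec h⟩) (le_sInf ?_)
  rintro r ⟨t, rfl, ht⟩
  exact_mod_cast Nat.find_min' h ht

lemma hitTimeLE_eq_top {Ω : Type*} {X : ℕ → Ω → ℝ} {k : ℝ} {ω : Ω}
    (h : ¬ ∃ t, X t ω ≤ k) : hitTimeLE X k ω = ⊤ := by
  unfold hitTimeLE
  have : {r : ℕ∞ | ∃ t : ℕ, r = (t : ℕ∞) ∧ X t ω ≤ k} = ∅ := by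
    ext r; simp only [Set.mem_setOf_eq, Set.mem_empty_iff_false, iff_false]
    rintro ⟨t, rfl, ht⟩; exact h ⟨t, ht⟩
  rw [this, sInf_empty]

lemma lt_hitTimeLE {Ω : Type*} {X : ℕ → Ω → ℝ} {k : ℝ} {ω : Ω} {n : ℕ} :
    (n : ℕ∞) < hitTimeLE X k ω ↔ ∀ s ≤ n, k < X s ω := by
  by_cases h : ∃ t, X t ω ≤ k
  · rw [hitTimeLE_eq_find h, Nat.cast_lt, Nat.lt_find_iff]
    simp [not_le]
  · push_neg at h
    rw [hitTimeLE_eq_top (by push_neg; exact h)]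
    refine ⟨fun _ s _ => h s, fun _ => lt_of_le_of_ne le_top (by exact_mod_cast ENat.coe_ne_top n)⟩

lemma drift_g_ineq {k k' x y : ℝ} (hk'pos : 0 < k') (hkk' : k ≤ k') (hx : k' ≤ x) (hxk : k < x)
    (hy0 : 0 ≤ y) (hyk : y ≤ k ∨ k' ≤ y) :
    (if y ≤ k then y / k' else 1 + Real.log (y / k')) ≤
    (if x ≤ k then x / k' else 1 + Real.log (x / k')) + y / x - 1 := by
  have hxpos : 0 < x := lt_of_lt_of_le hk'pos hx
  rw [if_neg (not_le.2 hxk)]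
  have h2 : 1 - k' / x ≤ Real.log (x / k') := by
    have := Real.log_le_sub_one_of_pos (x := k' / x) (by positivity)
    rw [Real.log_div (ne_of_gt hk'pos) (ne_of_gt hxpos)] at this
    rw [Real.log_div (ne_of_gt hxpos) (ne_of_gt hk'pos)]
    linarith
  rcases hyk with hyk | hyk
  · rw [if_pos hyk]
    have h1 : y / k' - y / x ≤ 1 - k' / x := by
      have key : y * (x - k') ≤ k' * (x - k') :=
        mul_le_mul_of_nonneg_right (hyk.trans hkk') (by linarith)
      rw [div_sub_div _ _ (ne_of_gt hk'pos) (ne_of_gt hxpos),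
        show (1 : ℝ) - k' / x = (x - k') / x by field_simp,
        div_le_div_iff₀ (by positivity) hxpos]
      nlinarith [mul_le_mul_of_nonneg_left key hxpos.le]
    linarith
  · by_cases hyk2 : y ≤ k
    · have hy : y = k' := le_antisymm (hyk2.trans hkk') hyk
      rw [if_pos hyk2, hy, div_self (ne_of_gt hk'pos)]
      have : k' / x ≤ y / x := by rw [hy]
      linarith
    · rw [if_neg hyk2]
      have hypos : 0 < y := lt_of_lt_of_le hk'pos hyk
      have h3 : Real.log (y / x) ≤ y / x - 1 := Real.log_le_sub_one_of_pos (by positivity)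
      rw [Real.log_div (ne_of_gt hypos) (ne_of_gt hxpos)] at h3
      rw [Real.log_div (ne_of_gt hypos) (ne_of_gt hk'pos),
          Real.log_div (ne_of_gt hxpos) (ne_of_gt hk'pos)]
      linarith

lemma enat_cast_eq_tsum (n : ℕ∞) :
    ((n : ℕ∞) : ENNReal) = ∑' t : ℕ, (if (t : ℕ∞) < n then (1 : ENNReal) else 0) := by
  cases n with
  | top =>
    simp only [lt_top_iff_ne_top]
    rw [tsum_congr (fun t => if_pos (by exact_mod_cast ENat.coe_ne_top t))]
    simp [ENNReal.tsum_const_eq_top_of_ne_zero one_ne_zero]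
  | coe m =>
    rw [tsum_eq_sum (s := Finset.range m) (fun t ht => if_neg (by
      simp only [Finset.mem_range, not_lt] at ht
      exact_mod_cast not_lt.2 (by exact_mod_cast ht)))]
    rw [Finset.sum_congr rfl (fun t ht => if_pos (by
      exact_mod_cast Finset.mem_range.1 ht))]
    simp

/-- Overshoot-aware multiplicative drift, upper bound: let the adapted integrable process take
values in `D ⊆ {0} ∪ (0,∞)`, let `k ∈ D` be the target, `T = inf{t : X_t ≤ k}` and
`k' = inf{x ∈ D : x > k} > 0`. If the process starts at the deterministic value `x0 ≥ k'`,
`T` is a.s. finite, `X_T` is integrable, and `X_t − E[X_{t+1} | F_t] ≥ δ·X_t` before time `T`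
for some `δ > 0`, then `E[T] ≤ (1/δ)·(1 − E[X_T]/k' + ln(x0/k'))`. -/
theorem overshoot_aware_multiplicative_drift_upper
    {Ω : Type*} {m0 : MeasurableSpace Ω} (μ : Measure Ω) [IsProbabilityMeasure μ]
    (ℱ : Filtration ℕ m0) (X : ℕ → Ω → ℝ)
    (hadapt : Adapted ℱ X) (hint : ∀ t, Integrable (X t) μ)
    (D : Set ℝ) (hD : D ⊆ {0} ∪ Set.Ioi (0 : ℝ)) (hXD : ∀ t ω, X t ω ∈ D)
    (k : ℝ) (hk : k ∈ D)
    (k' : ℝ) (hk'def : k' = sInf {x | x ∈ D ∧ k < x}) (hk'pos : 0 < k')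
    (x0 : ℝ) (hx0 : k' ≤ x0) (hX0 : ∀ ω, X 0 ω = x0)
    (hfin : ∀ᵐ ω ∂μ, hitTimeLE X k ω < ⊤)
    (hTint : Integrable (stoppedVal X (hitTimeLE X k)) μ)
    (δ : ℝ) (hδ : 0 < δ)
    (hdrift : ∀ t : ℕ, ∀ᵐ ω ∂μ, (t : ℕ∞) < hitTimeLE X k ω →
      δ * X t ω ≤ X t ω - (μ[X (t + 1)|ℱ t]) ω) :
    ∫⁻ ω, ((hitTimeLE X k ω : ℕ∞) : ENNReal) ∂μ
      ≤ ENNReal.ofReal ((1 / δ) *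
          (1 - (∫ ω, stoppedVal X (hitTimeLE X k) ω ∂μ) / k' + Real.log (x0 / k'))) := by
  classical
  -- basic facts about D, k, k'
  have hD0 : ∀ x ∈ D, 0 ≤ x := by
    intro x hx
    rcases hD hx with h | h
    · exact le_of_eq (Set.mem_singleton_iff.1 h).symm
    · exact (Set.mem_Ioi.1 h).le
  have hk0 : 0 ≤ k := hD0 k hk
  have hSne : {x | x ∈ D ∧ k < x}.Nonempty := by
    by_contra h
    rw [Set.not_nonempty_iff_eq_empty] at h
    rw [h, Real.sInf_empty] at hk'def
    exact absurd hk'def (by intro hh; rw [hh] at hk'pos; exact lt_irrefl 0 hk'pos)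
  have hkk' : k ≤ k' := hk'def ▸ le_csInf hSne (fun b hb => hb.2.le)
  have hk'le : ∀ x, x ∈ D → k < x → k' ≤ x := fun x hx hkx =>
    hk'def ▸ csInf_le ⟨k, fun b hb => hb.2.le⟩ ⟨hx, hkx⟩
  -- the potential function
  set g : ℝ → ℝ := fun x => if x ≤ k then x / k' else 1 + Real.log (x / k') with hgdef
  have hgmeas : Measurable g := by
    apply Measurable.ite (measurableSet_le measurable_id measurable_const)
    · exact measurable_id.div_const _
    · exact ((measurable_id.div_const _).log).const_add 1
  have hg_nonneg : ∀ x ∈ D, 0 ≤ g x := by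
    intro x hx
    by_cases hxk : x ≤ k
    · simp only [hgdef, if_pos hxk]
      exact div_nonneg (hD0 x hx) hk'pos.le
    · simp only [hgdef, if_neg hxk]
      have : 0 ≤ Real.log (x / k') :=
        Real.log_nonneg ((one_le_div hk'pos).2 (hk'le x hx (not_le.1 hxk)))
      linarith
  have hg_le : ∀ x ∈ D, g x ≤ 1 + x / k' := by
    intro x hx
    by_cases hxk : x ≤ k
    · simp only [hgdef, if_pos hxk]; linarith [div_nonneg (hD0 x hx) hk'pos.le]
    · simp only [hgdef, if_neg hxk]
      have hxk' : k' ≤ x := hk'le x hx (not_le.1 hxk)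
      have := Real.log_le_sub_one_of_pos (x := x / k')
        (div_pos (lt_of_lt_of_le hk'pos hxk') hk'pos)
      linarith
  have hXnn : ∀ t ω, 0 ≤ X t ω := fun t ω => hD0 _ (hXD t ω)
  have hXm : ∀ t, Measurable (X t) := fun t => (Measurable.mono (hadapt t) (ℱ.le t) le_rfl)
  -- the events A t = {t < T}
  have hA_f : ∀ t : ℕ, MeasurableSet[ℱ t] {ω | (t : ℕ∞) < hitTimeLE X k ω} := by
    intro t
    have hset : {ω | (t : ℕ∞) < hitTimeLE X k ω} = ⋂ s ∈ Finset.range (t + 1), X s ⁻¹' Set.Ioi k := by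
      ext ω
      simp only [Set.mem_setOf_eq, lt_hitTimeLE, Set.mem_iInter, Finset.mem_range,
        Set.mem_preimage, Set.mem_Ioi, Nat.lt_succ_iff]
    rw [hset]
    refine MeasurableSet.biInter (Set.to_countable _) (fun s hs => ?_)
    have hs' : s ≤ t := Nat.lt_succ_iff.1 (Finset.mem_range.1 hs)
    exact ℱ.mono hs' _ ((hadapt s) measurableSet_Ioi)
  have hA_m0 : ∀ t : ℕ, MeasurableSet {ω | (t : ℕ∞) < hitTimeLE X k ω} := fun t => ℱ.le t _ (hA_f t)
  have hXA : ∀ (t : ℕ) ω, (t : ℕ∞) < hitTimeLE X k ω → k' ≤ X t ω :=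
    fun t ω h => hk'le _ (hXD t ω) (lt_hitTimeLE.1 h t le_rfl)
  -- stopped value facts
  have hsv_ae : ∀ᵐ ω ∂μ, stoppedVal X (hitTimeLE X k) ω ≤ k := by
    filter_upwards [hfin] with ω hω
    by_cases h : ∃ t, X t ω ≤ k
    · unfold stoppedVal
      rw [hitTimeLE_eq_find h]
      simpa using Nat.find_spec h
    · rw [hitTimeLE_eq_top h] at hω
      exact absurd hω (lt_irrefl ⊤)
  have hsvD : ∀ ω, stoppedVal X (hitTimeLE X k) ω ∈ D := fun ω =>
    hXD ((hitTimeLE X k ω).toNat) ω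
  have hgsv_ae : (fun ω => g (stoppedVal X (hitTimeLE X k) ω))
      =ᵐ[μ] (fun ω => stoppedVal X (hitTimeLE X k) ω / k') := by
    filter_upwards [hsv_ae] with ω h
    simp only [hgdef, if_pos h]
  have hgsv_int : Integrable (fun ω => g (stoppedVal X (hitTimeLE X k) ω)) μ :=
    (hTint.div_const k').congr hgsv_ae.symm
  have hgX_int : ∀ t, Integrable (fun ω => g (X t ω)) μ := by
    intro t
    refine Integrable.mono' ((integrable_const (1 : ℝ)).add ((hint t).div_const k'))
      (hgmeas.comp (hXm t)).aestronglyMeasurable ?_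
    filter_upwards with ω
    rw [Real.norm_of_nonneg (hg_nonneg _ (hXD t ω))]
    exact hg_le _ (hXD t ω)
  -- the supermartingale-like process
  set Z : ℕ → Ω → ℝ := fun t ω => if (t : ℕ∞) ≤ hitTimeLE X k ω then g (X t ω)
    else g (stoppedVal X (hitTimeLE X k) ω) with hZdef
  have hTle_meas : ∀ t : ℕ, MeasurableSet {ω | (t : ℕ∞) ≤ hitTimeLE X k ω} := by
    intro t
    cases t with
    | zero =>
      have : {ω | ((0 : ℕ) : ℕ∞) ≤ hitTimeLE X k ω} = Set.univ := by
        ext ω; simp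
      rw [this]; exact MeasurableSet.univ
    | succ n =>
      have : {ω | ((n + 1 : ℕ) : ℕ∞) ≤ hitTimeLE X k ω}
          = {ω | (n : ℕ∞) < hitTimeLE X k ω} := by
        ext ω
        simp only [Set.mem_setOf_eq]
        rw [Nat.cast_add, Nat.cast_one]
        exact ENat.add_one_le_iff (ENat.coe_ne_top n)
      rw [this]; exact hA_m0 n
  have hZeq : ∀ t, Z t = fun ω =>
      Set.indicator {ω | (t : ℕ∞) ≤ hitTimeLE X k ω} (fun ω => g (X t ω)) ω
      + Set.indicator {ω | (t : ℕ∞) ≤ hitTimeLE X k ω}ᶜ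
          (fun ω => g (stoppedVal X (hitTimeLE X k) ω)) ω := by
    intro t
    funext ω
    by_cases h : (t : ℕ∞) ≤ hitTimeLE X k ω
    · simp [hZdef, h, Set.indicator_of_mem (show ω ∈ {ω | (t : ℕ∞) ≤ hitTimeLE X k ω} from h)]
    · simp [hZdef, h, Set.indicator_of_notMem (show ω ∉ {ω | (t : ℕ∞) ≤ hitTimeLE X k ω} from h)]
  have hZint : ∀ t, Integrable (Z t) μ := by
    intro t
    rw [hZeq t]
    exact ((hgX_int t).indicator (hTle_meas t)).add (hgsv_int.indicator (hTle_meas t).compl)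
  -- one-step drift inequality for Z
  have hstep : ∀ t : ℕ, ∫ ω, Z (t + 1) ω ∂μ
      ≤ ∫ ω, Z t ω ∂μ - δ * (μ {ω | (t : ℕ∞) < hitTimeLE X k ω}).toReal := by
    intro t
    set A : Set Ω := {ω | (t : ℕ∞) < hitTimeLE X k ω} with hAdef
    set W : Ω → ℝ := A.indicator (fun ω => (X t ω)⁻¹) with hWdef
    have hW_sm : StronglyMeasurable[ℱ t] W :=
      (((Measurable.inv (hadapt t))).indicator (hA_f t)).stronglyMeasurable
    have hWbd : ∀ ω, ‖W ω‖ ≤ k'⁻¹ := by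
      intro ω
      rw [hWdef]
      by_cases h : ω ∈ A
      · rw [Set.indicator_of_mem h, Real.norm_eq_abs, abs_of_nonneg (inv_nonneg.2 (hXnn t ω))]
        exact inv_anti₀ hk'pos (hXA t ω h)
      · rw [Set.indicator_of_notMem h]
        simp [inv_nonneg.2 hk'pos.le]
    have hW_aesm : AEStronglyMeasurable W μ := (hW_sm.mono (ℱ.le t)).aestronglyMeasurable
    have hWX_int : Integrable (fun ω => W ω * X (t + 1) ω) μ :=
      (hint (t + 1)).bdd_mul hW_aesm (Filter.Eventually.of_forall hWbd)
    have hWX_int' : Integrable (W * X (t + 1)) μ := hWX_int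
    have hpull : μ[W * X (t + 1)|ℱ t] =ᵐ[μ] W * μ[X (t + 1)|ℱ t] :=
      condExp_mul_of_stronglyMeasurable_left hW_sm hWX_int' (hint (t + 1))
    have hWE_int : Integrable (fun ω => W ω * (μ[X (t + 1)|ℱ t]) ω) μ :=
      integrable_condExp.bdd_mul hW_aesm (Filter.Eventually.of_forall hWbd)
    have hint1 : ∫ ω, W ω * X (t + 1) ω ∂μ = ∫ ω, W ω * (μ[X (t + 1)|ℱ t]) ω ∂μ := by
      have h' := (integral_condExp (μ := μ) (f := W * X (t + 1)) (ℱ.le t)).symm.trans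
        (integral_congr_ae hpull)
      simpa [Pi.mul_apply] using h'
    have hint2 : ∫ ω, W ω * (μ[X (t + 1)|ℱ t]) ω ∂μ ≤ (1 - δ) * (μ A).toReal := by
      have hle : ∀ᵐ ω ∂μ, W ω * (μ[X (t + 1)|ℱ t]) ω ≤ A.indicator (fun _ => 1 - δ) ω := by
        filter_upwards [hdrift t] with ω hω
        by_cases h : ω ∈ A
        · rw [Set.indicator_of_mem h, hWdef, Set.indicator_of_mem h]
          have hXt : k' ≤ X t ω := hXA t ω h
          have hXpos : 0 < X t ω := lt_of_lt_of_le hk'pos hXt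
          have hE : (μ[X (t + 1)|ℱ t]) ω ≤ (1 - δ) * X t ω := by
            have := hω h; nlinarith
          rw [inv_mul_le_iff₀ hXpos]
          calc (μ[X (t + 1)|ℱ t]) ω ≤ (1 - δ) * X t ω := hE
            _ = X t ω * (1 - δ) := by ring
        · rw [Set.indicator_of_notMem h, hWdef, Set.indicator_of_notMem h, zero_mul]
      have hmono := integral_mono_ae hWE_int
        ((integrable_const (1 - δ)).indicator (hA_m0 t)) hle
      rwa [integral_indicator_const _ (hA_m0 t), smul_eq_mul, mul_comm] at hmono
    -- pointwise identification of the increment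
    have hZdiff : ∀ ω, Z (t + 1) ω - Z t ω
        = A.indicator (fun ω => g (X (t + 1) ω) - g (X t ω)) ω := by
      intro ω
      simp only [hZdef]
      by_cases h : ω ∈ A
      · have h1 : (t : ℕ∞) ≤ hitTimeLE X k ω := le_of_lt h
        have h2 : ((t + 1 : ℕ) : ℕ∞) ≤ hitTimeLE X k ω := by
          exact_mod_cast (ENat.add_one_le_iff (ENat.coe_ne_top t)).2 h
        rw [if_pos h1, if_pos h2, Set.indicator_of_mem h]
      · rw [Set.indicator_of_notMem h]
        have hTle : hitTimeLE X k ω ≤ (t : ℕ∞) := not_lt.1 h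
        by_cases h' : (t : ℕ∞) ≤ hitTimeLE X k ω
        · have hTt : hitTimeLE X k ω = (t : ℕ∞) := le_antisymm hTle h'
          have h2 : ¬ ((t + 1 : ℕ) : ℕ∞) ≤ hitTimeLE X k ω := by
            rw [hTt]
            exact_mod_cast Nat.not_succ_le_self t
          have hsv : stoppedVal X (hitTimeLE X k) ω = X t ω := by
            unfold stoppedVal
            rw [hTt]
            simp
          rw [if_pos h', if_neg h2, hsv, sub_self]
        · have h2 : ¬ ((t + 1 : ℕ) : ℕ∞) ≤ hitTimeLE X k ω := fun hh =>
            h' (le_trans (by exact_mod_cast Nat.le_succ t) hh)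
          rw [if_neg h', if_neg h2, sub_self]
    -- compare the increment with the normalized drift
    have hF1_int : Integrable (A.indicator (fun ω => g (X (t + 1) ω) - g (X t ω))) μ :=
      ((hgX_int (t + 1)).sub (hgX_int t)).indicator (hA_m0 t)
    have hF2eq : A.indicator (fun ω => X (t + 1) ω * (X t ω)⁻¹ - 1)
        = fun ω => W ω * X (t + 1) ω - A.indicator (fun _ => (1 : ℝ)) ω := by
      funext ω
      by_cases h : ω ∈ A
      · rw [Set.indicator_of_mem h, hWdef, Set.indicator_of_mem h, Set.indicator_of_mem h]
        ring
      · rw [Set.indicator_of_notMem h, hWdef, Set.indicator_of_notMem h,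
          Set.indicator_of_notMem h]
        ring
    have hF2_int : Integrable (A.indicator (fun ω => X (t + 1) ω * (X t ω)⁻¹ - 1)) μ := by
      rw [hF2eq]
      exact hWX_int.sub ((integrable_const (1 : ℝ)).indicator (hA_m0 t))
    have hF1_le : ∀ ω, A.indicator (fun ω => g (X (t + 1) ω) - g (X t ω)) ω
        ≤ A.indicator (fun ω => X (t + 1) ω * (X t ω)⁻¹ - 1) ω := by
      intro ω
      by_cases h : ω ∈ A
      · rw [Set.indicator_of_mem h, Set.indicator_of_mem h]
        have hXt : k' ≤ X t ω := hXA t ω h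
        have hXtk : k < X t ω := lt_hitTimeLE.1 h t le_rfl
        have hyk : X (t + 1) ω ≤ k ∨ k' ≤ X (t + 1) ω := by
          by_cases hy : X (t + 1) ω ≤ k
          · exact Or.inl hy
          · exact Or.inr (hk'le _ (hXD (t + 1) ω) (not_le.1 hy))
        have := drift_g_ineq hk'pos hkk' hXt hXtk (hXnn (t + 1) ω) hyk
        simp only [hgdef]
        rw [← div_eq_mul_inv]
        linarith
      · rw [Set.indicator_of_notMem h, Set.indicator_of_notMem h]
    have hchain : ∫ ω, Z (t + 1) ω ∂μ - ∫ ω, Z t ω ∂μ ≤ - (δ * (μ A).toReal) := by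
      have e1 : ∫ ω, Z (t + 1) ω ∂μ - ∫ ω, Z t ω ∂μ
          = ∫ ω, A.indicator (fun ω => g (X (t + 1) ω) - g (X t ω)) ω ∂μ := by
        rw [← integral_sub (hZint (t + 1)) (hZint t)]
        exact integral_congr_ae (Filter.Eventually.of_forall hZdiff)
      have e2 : ∫ ω, A.indicator (fun ω => g (X (t + 1) ω) - g (X t ω)) ω ∂μ
          ≤ ∫ ω, A.indicator (fun ω => X (t + 1) ω * (X t ω)⁻¹ - 1) ω ∂μ :=
        integral_mono hF1_int hF2_int hF1_le
      have e3 : ∫ ω, A.indicator (fun ω => X (t + 1) ω * (X t ω)⁻¹ - 1) ω ∂μ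
          = ∫ ω, W ω * X (t + 1) ω ∂μ - (μ A).toReal := by
        rw [hF2eq, integral_sub hWX_int ((integrable_const (1 : ℝ)).indicator (hA_m0 t)),
          integral_indicator_const _ (hA_m0 t)]
        simp [Measure.real, hAdef]
      rw [e1]
      refine e2.trans ?_
      rw [e3, hint1]
      have := hint2
      nlinarith [hint2]
    linarith [hchain]
  -- telescoping
  have hZ0 : ∫ ω, Z 0 ω ∂μ = g x0 := by
    have : Z 0 = fun _ => g x0 := by
      funext ω
      simp only [hZdef]
      rw [if_pos (by exact_mod_cast (zero_le : (0 : ℕ∞) ≤ hitTimeLE X k ω)), hX0 ω]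
    rw [this, integral_const, probReal_univ, one_smul]
  have hsum : ∀ n : ℕ, ∫ ω, Z n ω ∂μ
      + δ * ∑ t ∈ Finset.range n, (μ {ω | (t : ℕ∞) < hitTimeLE X k ω}).toReal ≤ g x0 := by
    intro n
    induction n with
    | zero => simp [hZ0]
    | succ n ih =>
      rw [Finset.sum_range_succ]
      have := hstep n
      linarith
  -- lower bound on ∫ Z n
  have hZlow : ∀ n : ℕ, ∫ ω, (fun ω => g (stoppedVal X (hitTimeLE X k) ω)) ω ∂μ
      - ∫ ω, Set.indicator {ω | (n : ℕ∞) < hitTimeLE X k ω}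
          (fun ω => g (stoppedVal X (hitTimeLE X k) ω)) ω ∂μ ≤ ∫ ω, Z n ω ∂μ := by
    intro n
    rw [← integral_sub hgsv_int (hgsv_int.indicator (hA_m0 n))]
    refine integral_mono (hgsv_int.sub (hgsv_int.indicator (hA_m0 n))) (hZint n) ?_
    intro ω
    simp only [hZdef, Pi.sub_apply]
    by_cases h : (n : ℕ∞) < hitTimeLE X k ω
    · rw [Set.indicator_of_mem (show ω ∈ {ω | (n : ℕ∞) < hitTimeLE X k ω} from h),
        if_pos (le_of_lt h), sub_self]
      exact hg_nonneg _ (hXD n ω)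
    · rw [Set.indicator_of_notMem (show ω ∉ {ω | (n : ℕ∞) < hitTimeLE X k ω} from h), sub_zero]
      by_cases h' : (n : ℕ∞) ≤ hitTimeLE X k ω
      · have hTt : hitTimeLE X k ω = (n : ℕ∞) := le_antisymm (not_lt.1 h) h'
        have hsv : stoppedVal X (hitTimeLE X k) ω = X n ω := by
          unfold stoppedVal; rw [hTt]; simp
        rw [if_pos h', hsv]
      · rw [if_neg h']
  -- the error term tends to zero
  have heps : Filter.Tendsto (fun n : ℕ => ∫ ω, Set.indicator {ω | (n : ℕ∞) < hitTimeLE X k ω}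
      (fun ω => g (stoppedVal X (hitTimeLE X k) ω)) ω ∂μ) atTop (nhds 0) := by
    have h0 : (0 : ℝ) = ∫ ω, (0 : Ω → ℝ) ω ∂μ := by simp
    rw [h0]
    refine tendsto_integral_of_dominated_convergence
      (fun ω => g (stoppedVal X (hitTimeLE X k) ω)) (fun n =>
        (hgsv_int.aestronglyMeasurable).indicator (hA_m0 n)) hgsv_int ?_ ?_
    · intro n
      filter_upwards [hsv_ae] with ω hω
      by_cases h : ω ∈ {ω | (n : ℕ∞) < hitTimeLE X k ω}
      · rw [Set.indicator_of_mem h]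
        exact le_of_eq (Real.norm_of_nonneg (hg_nonneg _ (hsvD ω)))
      · rw [Set.indicator_of_notMem h, norm_zero]
        exact hg_nonneg _ (hsvD ω)
    · filter_upwards [hfin] with ω hω
      have hne : hitTimeLE X k ω ≠ ⊤ := ne_of_lt hω
      refine Filter.Tendsto.congr' ?_ tendsto_const_nhds
      rw [Filter.EventuallyEq, Filter.eventually_atTop]
      refine ⟨(hitTimeLE X k ω).toNat, fun n hn => ?_⟩
      have hmem : ω ∉ {ω' : Ω | (n : ℕ∞) < hitTimeLE X k ω'} := by
        simp only [Set.mem_setOf_eq, not_lt]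
        rw [← ENat.coe_toNat hne]
        exact_mod_cast hn
      rw [Set.indicator_of_notMem hmem]
      simp
  -- the partial sums are bounded
  have hCbound : ∀ n : ℕ, δ * ∑ t ∈ Finset.range n, (μ {ω | (t : ℕ∞) < hitTimeLE X k ω}).toReal
      ≤ g x0 - ∫ ω, g (stoppedVal X (hitTimeLE X k) ω) ∂μ := by
    intro n
    have hlim : Filter.Tendsto (fun m : ℕ => g x0 - ∫ ω, g (stoppedVal X (hitTimeLE X k) ω) ∂μ
        + ∫ ω, Set.indicator {ω | (m : ℕ∞) < hitTimeLE X k ω}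
          (fun ω => g (stoppedVal X (hitTimeLE X k) ω)) ω ∂μ) atTop
        (nhds (g x0 - ∫ ω, g (stoppedVal X (hitTimeLE X k) ω) ∂μ)) := by
      have h' := (tendsto_const_nhds :
        Filter.Tendsto (fun _ : ℕ => g x0 - ∫ ω, g (stoppedVal X (hitTimeLE X k) ω) ∂μ)
          atTop _).add heps
      simpa using h'
    refine ge_of_tendsto hlim ?_
    rw [Filter.eventually_atTop]
    refine ⟨n, fun m hm => ?_⟩
    have hmono : ∑ t ∈ Finset.range n, (μ {ω | (t : ℕ∞) < hitTimeLE X k ω}).toReal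
        ≤ ∑ t ∈ Finset.range m, (μ {ω | (t : ℕ∞) < hitTimeLE X k ω}).toReal :=
      Finset.sum_le_sum_of_subset_of_nonneg (Finset.range_subset_range.2 hm)
        (fun _ _ _ => ENNReal.toReal_nonneg)
    have h1 := hsum m
    have h2 := hZlow m
    have h3 := mul_le_mul_of_nonneg_left hmono hδ.le
    linarith
  -- compute the integral of g at the stopped value
  have hintgsv : ∫ ω, g (stoppedVal X (hitTimeLE X k) ω) ∂μ
      = (∫ ω, stoppedVal X (hitTimeLE X k) ω ∂μ) / k' := by
    rw [integral_congr_ae hgsv_ae, integral_div]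
  have hgx0 : g x0 = 1 + Real.log (x0 / k') := by
    by_cases h : x0 ≤ k
    · have hx0k : x0 = k' := le_antisymm (h.trans hkk') hx0
      simp only [hgdef, if_pos h, hx0k, div_self (ne_of_gt hk'pos), Real.log_one]
      norm_num
    · simp only [hgdef, if_neg h]
  -- partial sums bounded by B
  have hSB : ∀ n : ℕ, ∑ t ∈ Finset.range n, (μ {ω | (t : ℕ∞) < hitTimeLE X k ω}).toReal
      ≤ (1 / δ) * (1 - (∫ ω, stoppedVal X (hitTimeLE X k) ω ∂μ) / k' + Real.log (x0 / k')) := by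
    intro n
    have h1 := hCbound n
    rw [hintgsv, hgx0] at h1
    rw [one_div_mul_eq_div, le_div_iff₀ hδ]
    linarith
    -- rewrite the lintegral as a sum of tail probabilities
  have hlin : ∫⁻ ω, ((hitTimeLE X k ω : ℕ∞) : ENNReal) ∂μ
      = ∑' t : ℕ, μ {ω | (t : ℕ∞) < hitTimeLE X k ω} := by
    have hpt : ∀ ω, ((hitTimeLE X k ω : ℕ∞) : ENNReal)
        = ∑' t : ℕ, Set.indicator {ω | (t : ℕ∞) < hitTimeLE X k ω} (fun _ => (1 : ENNReal)) ω := by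
      intro ω
      rw [enat_cast_eq_tsum (hitTimeLE X k ω)]
      refine tsum_congr fun t => ?_
      by_cases h : (t : ℕ∞) < hitTimeLE X k ω
      · rw [if_pos h, Set.indicator_of_mem (show ω ∈ {ω | (t : ℕ∞) < hitTimeLE X k ω} from h)]
      · rw [if_neg h, Set.indicator_of_notMem
          (show ω ∉ {ω | (t : ℕ∞) < hitTimeLE X k ω} from h)]
    calc ∫⁻ ω, ((hitTimeLE X k ω : ℕ∞) : ENNReal) ∂μ
        = ∫⁻ ω, ∑' t : ℕ, Set.indicator {ω | (t : ℕ∞) < hitTimeLE X k ω}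
            (fun _ => (1 : ENNReal)) ω ∂μ := lintegral_congr hpt
      _ = ∑' t : ℕ, ∫⁻ ω, Set.indicator {ω | (t : ℕ∞) < hitTimeLE X k ω}
            (fun _ => (1 : ENNReal)) ω ∂μ :=
          lintegral_tsum (fun t => (measurable_const.indicator (hA_m0 t)).aemeasurable)
      _ = ∑' t : ℕ, μ {ω | (t : ℕ∞) < hitTimeLE X k ω} := by
          refine tsum_congr fun t => ?_
          rw [lintegral_indicator_const (hA_m0 t), one_mul]
  rw [hlin]
  refine Summable.tsum_le_of_sum_le ENNReal.summable (fun s => ?_)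
  have hsub : s ⊆ Finset.range (s.sup id + 1) := fun i hi =>
    Finset.mem_range.2 (Nat.lt_succ_of_le (Finset.le_sup (f := id) hi))
  calc ∑ t ∈ s, μ {ω | (t : ℕ∞) < hitTimeLE X k ω}
      ≤ ∑ t ∈ Finset.range (s.sup id + 1), μ {ω | (t : ℕ∞) < hitTimeLE X k ω} :=
        Finset.sum_le_sum_of_subset hsub
    _ = ENNReal.ofReal (∑ t ∈ Finset.range (s.sup id + 1),
          (μ {ω | (t : ℕ∞) < hitTimeLE X k ω}).toReal) := by
        rw [ENNReal.ofReal_sum_of_nonneg (fun i _ => ENNReal.toReal_nonneg)]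
        exact Finset.sum_congr rfl (fun i _ => (ENNReal.ofReal_toReal (measure_ne_top μ _)).symm)
    _ ≤ _ := ENNReal.ofReal_le_ofReal (hSB (s.sup id + 1))
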